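/- arXiv:2212.05000 — 3 statements merged into one kernel-verified Lean document; each statement's English description precedes it below -/
import Mathlib

section
/- Let $P \subset \mathbb{R}^n$ be a compact convex body containing $0$ in its interior, and let $f : P \to \mathbb{R}$ be a convex function attaining its minimum at $0$ with $f(0) \geq 0$. Then the function $F(t) := \int_{t\,\partial P} f\, d\sigma = t^{n-1}\int_{\partial P} f(tx)\, d\sigma(x)$ is convex on $[0,1]$. -/
open MeasureTheory

theorem aux_pointwise {n : ℕ} {P : Set (Fin n → ℝ)} (hP : Convex ℝ P)
    (h0P : (0 : Fin n → ℝ) ∈ P)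
    {f : (Fin n → ℝ) → ℝ} (hf : ConvexOn ℝ P f)
    (hmin : ∀ x ∈ P, f 0 ≤ f x) (hf0 : 0 ≤ f 0)
    {x : Fin n → ℝ} (hx : x ∈ P) :
    ConvexOn ℝ (Set.Icc (0 : ℝ) 1) (fun t => t ^ (n - 1) * f (t • x)) := by
  have htx : ∀ t ∈ Set.Icc (0 : ℝ) 1, t • x ∈ P := by
    intro t ht
    have := hP h0P hx (by linarith [ht.1, ht.2] : (0:ℝ) ≤ 1 - t) ht.1 (by ring)
    simpa using this
  -- φ(t) = f (t • x) is convex on [0,1]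
  have hφconv : ConvexOn ℝ (Set.Icc (0 : ℝ) 1) (fun t => f (t • x)) := by
    refine ⟨convex_Icc 0 1, fun a ha b hb p q hp hq hpq => ?_⟩
    have : (p • a + q • b) • x = p • (a • x) + q • (b • x) := by
      simp [smul_smul, add_smul]
    simp only [this]
    exact hf.2 (htx a ha) (htx b hb) hp hq hpq
  have hφ0 : ∀ t ∈ Set.Icc (0 : ℝ) 1, (0:ℝ) ≤ f (t • x) := fun t ht =>
    hf0.trans (hmin _ (htx t ht))
  have hφmono : ∀ s ∈ Set.Icc (0:ℝ) 1, ∀ t ∈ Set.Icc (0:ℝ) 1, s ≤ t →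
      f (s • x) ≤ f (t • x) := by
    intro s hs t ht hst
    rcases eq_or_lt_of_le ht.1 with h | h
    · have : s = 0 := le_antisymm (hst.trans h.symm.le) hs.1
      rw [this, ← h]
    · have hs' : s • x = (s/t) • (t • x) + (1 - s/t) • (0 : Fin n → ℝ) := by
        simp [smul_smul]
        field_simp
      have h1 : (0:ℝ) ≤ s/t := div_nonneg hs.1 h.le
      have h2 : (0:ℝ) ≤ 1 - s/t := by
        have : s/t ≤ 1 := div_le_one_of_le₀ hst h.le
        linarith
      calc f (s • x) ≤ (s/t) * f (t • x) + (1 - s/t) * f 0 := by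
            rw [hs']
            simpa using hf.2 (htx t ht) h0P h1 h2 (by ring)
        _ ≤ (s/t) * f (t • x) + (1 - s/t) * f (t • x) := by
            gcongr
            exact hmin _ (htx t ht)
        _ = f (t • x) := by ring
  -- power part
  have hpow : ConvexOn ℝ (Set.Icc (0:ℝ) 1) (fun t => t ^ (n-1)) :=
    (convexOn_pow (n-1)).subset (fun t ht => ht.1) (convex_Icc 0 1)
  refine hpow.mul hφconv (fun t ht => pow_nonneg ht.1 _) hφ0 ?_
  intro a ha b hb hlt
  rcases le_total a b with h | h
  · exact pow_le_pow_left₀ ha.1 h _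
  · exact absurd (hφmono b hb a ha h) (not_le.mpr hlt)

/-- Let `P` be a compact convex body containing `0` in its interior, `σ` a finite surface
measure on `∂P`, and `f` a convex function on `P` attaining its minimum at `0` with
`f(0) ≥ 0`. Then `F(t) = t^(n-1) ∫_{∂P} f(t x) dσ(x)` is convex on `[0,1]`. -/
theorem boundary_integral_convex {n : ℕ} (hn : 1 ≤ n)
    (P : Set (Fin n → ℝ)) (hPc : IsCompact P) (hPconv : Convex ℝ P)
    (h0 : (0 : Fin n → ℝ) ∈ interior P)
    (σ : Measure (Fin n → ℝ)) [IsFiniteMeasure σ]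
    (f : (Fin n → ℝ) → ℝ) (hf : ConvexOn ℝ P f)
    (hmin : ∀ x ∈ P, f 0 ≤ f x) (hf0 : 0 ≤ f 0)
    (hint : ∀ t ∈ Set.Icc (0 : ℝ) 1, IntegrableOn (fun x => f (t • x)) (frontier P) σ) :
    ConvexOn ℝ (Set.Icc (0 : ℝ) 1)
      (fun t => t ^ (n - 1) * ∫ x in frontier P, f (t • x) ∂σ) := by
  have h0P : (0 : Fin n → ℝ) ∈ P := interior_subset h0
  have hfr : frontier P ⊆ P := by
    rw [frontier, hPc.isClosed.closure_eq]
    exact Set.diff_subset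
  have hmeas : MeasurableSet (frontier P) := isClosed_frontier.measurableSet
  refine ⟨convex_Icc 0 1, fun a ha b hb p q hp hq hpq => ?_⟩
  have hc : p • a + q • b ∈ Set.Icc (0:ℝ) 1 := (convex_Icc 0 1) ha hb hp hq hpq
  set c := p • a + q • b with hcdef
  simp only [smul_eq_mul]
  have key : ∀ x ∈ frontier P,
      c ^ (n-1) * f (c • x) ≤ p * (a ^ (n-1) * f (a • x)) + q * (b ^ (n-1) * f (b • x)) := by
    intro x hx
    have := (aux_pointwise hPconv h0P hf hmin hf0 (hfr hx)).2 ha hb hp hq hpq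
    simpa [hcdef, smul_eq_mul] using this
  have hIa := hint a ha
  have hIb := hint b hb
  have hIc := hint c hc
  have hLto : (c ^ (n-1) * ∫ x in frontier P, f (c • x) ∂σ)
      = ∫ x in frontier P, c ^ (n-1) * f (c • x) ∂σ := (integral_const_mul _ _).symm
  rw [hLto]
  have hR : ∫ x in frontier P,
      (p * (a ^ (n-1) * f (a • x)) + q * (b ^ (n-1) * f (b • x))) ∂σ
      = p * (a ^ (n-1) * ∫ x in frontier P, f (a • x) ∂σ)
        + q * (b ^ (n-1) * ∫ x in frontier P, f (b • x) ∂σ) := by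
    rw [integral_add ((hIa.const_mul _).const_mul _) ((hIb.const_mul _).const_mul _)]
    rw [integral_const_mul, integral_const_mul, integral_const_mul, integral_const_mul]
  rw [← hR]
  exact setIntegral_mono_on (hIc.const_mul _)
    (((hIa.const_mul _).const_mul _).add ((hIb.const_mul _).const_mul _)) hmeas key
end

section
/- Let $P \subset \mathbb{R}^n$ be an integral polytope whose boundary $\partial kP$ (for a given $k$) admits a triangulation into unimodular $(n-1)$-simplices such that every lattice point $p \in \partial kP$ is contained in at most $n!$ simplices of the triangulation. Then for every convex function $f : kP \to \mathbb{R}$ with $f \geq 0$ on $\partial kP$, $\int_{\partial kP} f\, d\sigma \leq \sum_{p \in \partial kP \cap \mathbb{Z}^n} f(p)$. -/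
open MeasureTheory

def Ssimp (d : ℕ) (r : ℝ) : Set (Fin d → ℝ) := {x | (∀ i, 0 ≤ x i) ∧ ∑ i, x i ≤ r}

lemma Ssimp_empty {d : ℕ} {r : ℝ} (hr : r < 0) : Ssimp d r = ∅ := by
  ext x
  simp only [Ssimp, Set.mem_setOf_eq, Set.mem_empty_iff_false, iff_false, not_and]
  intro hx hs
  exact absurd (le_trans (Finset.sum_nonneg fun i _ => hx i) hs) (not_le.2 hr)

lemma isClosed_Ssimp (d : ℕ) (r : ℝ) : IsClosed (Ssimp d r) := by
  have h1 : IsClosed {x : Fin d → ℝ | ∀ i, 0 ≤ x i} := by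
    have : {x : Fin d → ℝ | ∀ i, 0 ≤ x i} = ⋂ i, {x | 0 ≤ x i} := by ext x; simp
    rw [this]
    exact isClosed_iInter fun i => isClosed_le continuous_const (continuous_apply i)
  have h2 : IsClosed {x : Fin d → ℝ | ∑ i, x i ≤ r} :=
    isClosed_le (by continuity) continuous_const
  exact (h1.inter h2)

lemma measurableSet_Ssimp (d : ℕ) (r : ℝ) : MeasurableSet (Ssimp d r) :=
  (isClosed_Ssimp d r).measurableSet

lemma isCompact_Ssimp (d : ℕ) (r : ℝ) : IsCompact (Ssimp d r) := by
  refine (isCompact_closedBall (0 : Fin d → ℝ) (max r 0)).of_isClosed_subset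
    (isClosed_Ssimp d r) ?_
  intro x hx
  rw [mem_closedBall_zero_iff]
  refine (pi_norm_le_iff_of_nonneg (le_max_right r 0)).2 fun i => ?_
  rw [Real.norm_eq_abs, abs_of_nonneg (hx.1 i)]
  exact le_max_of_le_left (le_trans (Finset.single_le_sum (fun j _ => hx.1 j) (Finset.mem_univ i)) hx.2)


lemma slice_lintegral (d : ℕ) (i : Fin (d + 1)) (r : ℝ) (g : ℝ → ENNReal) (hg : Measurable g) :
    ∫⁻ x in Ssimp (d + 1) r, g (x i) =
      ∫⁻ t in Set.Icc 0 r, g t * volume (Ssimp d (r - t)) := by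
  classical
  set e := MeasurableEquiv.piFinSuccAbove (fun _ : Fin (d+1) => ℝ) i with he
  have hfst : ∀ x : Fin (d+1) → ℝ, (e x).1 = x i := fun x => rfl
  have hsnd : ∀ (x : Fin (d+1) → ℝ) (j : Fin d), (e x).2 j = x (i.succAbove j) := fun x j => rfl
  set T : Set (ℝ × (Fin d → ℝ)) :=
    {p | 0 ≤ p.1 ∧ (∀ j, 0 ≤ p.2 j) ∧ p.1 + ∑ j, p.2 j ≤ r} with hT
  have hTm : MeasurableSet T := by
    have : T = {p : ℝ × (Fin d → ℝ) | 0 ≤ p.1} ∩ ((⋂ j, {p : ℝ × (Fin d → ℝ) | 0 ≤ p.2 j}) ∩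
        {p : ℝ × (Fin d → ℝ) | p.1 + ∑ j, p.2 j ≤ r}) := by
      ext p; simp [hT]
    rw [this]
    refine (measurableSet_le measurable_const measurable_fst).inter
      ((MeasurableSet.iInter fun j => measurableSet_le measurable_const
        ((measurable_pi_apply j).comp measurable_snd)).inter
        (measurableSet_le (measurable_fst.add (Finset.measurable_sum _ fun j _ =>
          (measurable_pi_apply j).comp measurable_snd)) measurable_const))
  have hmem : ∀ x : Fin (d + 1) → ℝ, x ∈ Ssimp (d + 1) r ↔ e x ∈ T := by
    intro x
    simp only [hT, Set.mem_setOf_eq, Ssimp, hfst, hsnd]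
    rw [Fin.sum_univ_succAbove (fun j => x j) i,
      Fin.forall_iff_succAbove (P := fun j => 0 ≤ x j) i]
    tauto
  have key : (fun x : Fin (d+1) → ℝ => (Ssimp (d+1) r).indicator (fun x => g (x i)) x)
      = (fun p : ℝ × (Fin d → ℝ) => T.indicator (fun p => g p.1) p) ∘ e := by
    funext x
    simp only [Function.comp_apply, Set.indicator_apply, ← hmem x, hfst]
  rw [← lintegral_indicator (measurableSet_Ssimp _ _), key, he]
  rw [show ((fun p : ℝ × (Fin d → ℝ) => T.indicator (fun p => g p.1) p) ∘
      (MeasurableEquiv.piFinSuccAbove (fun _ : Fin (d+1) => ℝ) i)) = fun x =>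
      T.indicator (fun p => g p.1)
        ((MeasurableEquiv.piFinSuccAbove (fun _ : Fin (d+1) => ℝ) i) x) from rfl]
  have hmeas : Measurable fun p : ℝ × (Fin d → ℝ) => T.indicator (fun p => g p.1) p :=
    Measurable.indicator (hg.comp measurable_fst) hTm
  rw [(volume_preserving_piFinSuccAbove (fun _ : Fin (d+1) => ℝ) i).lintegral_comp hmeas]
  rw [MeasureTheory.Measure.volume_eq_prod, MeasureTheory.lintegral_prod _ hmeas.aemeasurable]
  rw [← lintegral_indicator measurableSet_Icc]
  congr 1
  funext t
  have hslice : ∀ y : Fin d → ℝ, ((t, y) ∈ T) ↔ (0 ≤ t ∧ y ∈ Ssimp d (r - t)) := by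
    intro y
    simp only [hT, Set.mem_setOf_eq, Ssimp]
    constructor
    · rintro ⟨h1, h2, h3⟩; exact ⟨h1, h2, by linarith⟩
    · rintro ⟨h1, h2, h3⟩; exact ⟨h1, h2, by linarith⟩
  by_cases ht : t ∈ Set.Icc (0:ℝ) r
  · have : (fun y : Fin d → ℝ => T.indicator (fun p => g p.1) (t, y))
        = (Ssimp d (r - t)).indicator (fun _ => g t) := by
      funext y
      simp only [Set.indicator_apply]
      by_cases hy : y ∈ Ssimp d (r - t) <;> simp [hslice y, hy, ht.1]
    rw [this, lintegral_indicator (measurableSet_Ssimp _ _), Set.indicator_of_mem ht,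
      setLIntegral_const]
  · rw [Set.indicator_of_notMem ht]
    have : (fun y : Fin d → ℝ => T.indicator (fun p => g p.1) (t, y)) = fun _ => 0 := by
      funext y
      rw [Set.indicator_of_notMem]
      rw [hslice y]
      rintro ⟨h1, h2⟩
      simp only [Set.mem_Icc, not_and, not_le] at ht
      have hrt := ht h1
      have h0 : (0:ℝ) ≤ ∑ j, y j := Finset.sum_nonneg fun j _ => h2.1 j
      have := h2.2
      linarith
    rw [this, lintegral_const, zero_mul]

lemma integral_Icc_pow (r : ℝ) (hr : 0 ≤ r) (d : ℕ) :
    ∫ t in Set.Icc (0:ℝ) r, (r - t) ^ d = r ^ (d + 1) / (d + 1) := by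
  rw [MeasureTheory.integral_Icc_eq_integral_Ioc, ← intervalIntegral.integral_of_le hr,
    intervalIntegral.integral_comp_sub_left (fun u => u ^ d) r]
  simp [integral_pow]

lemma volume_Ssimp : ∀ (d : ℕ) (r : ℝ), 0 ≤ r →
    volume (Ssimp d r) = ENNReal.ofReal (r ^ d / d.factorial)
  | 0, r, hr => by
      have h : Ssimp 0 r = Set.univ := by
        ext x
        simp [Ssimp, hr]
      rw [h]
      simp [volume_pi, Measure.pi_univ]
  | (d+1), r, hr => by
      have h1 : volume (Ssimp (d+1) r) = ∫⁻ x in Ssimp (d+1) r, (1:ENNReal) :=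
        (setLIntegral_one _).symm
      rw [h1, slice_lintegral d 0 r (fun _ => 1) measurable_const]
      have h2 : ∀ᵐ t ∂(volume.restrict (Set.Icc (0:ℝ) r)),
          (1:ENNReal) * volume (Ssimp d (r - t)) =
          ENNReal.ofReal ((1 / d.factorial) * (r - t) ^ d) := by
        refine (ae_restrict_mem measurableSet_Icc).mono fun t ht => ?_
        rw [one_mul, volume_Ssimp d (r - t) (by simpa using ht.2)]
        congr 1
        field_simp
      rw [lintegral_congr_ae h2]
      have hint : IntegrableOn (fun t : ℝ => (1 / (d.factorial:ℝ)) * (r - t) ^ d)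
          (Set.Icc 0 r) volume :=
        (Continuous.integrableOn_Icc (by continuity))
      rw [← MeasureTheory.ofReal_integral_eq_lintegral_ofReal hint
        ((ae_restrict_mem measurableSet_Icc).mono fun t ht =>
          mul_nonneg (by positivity) (pow_nonneg (sub_nonneg.2 ht.2) _))]
      rw [integral_const_mul, integral_Icc_pow r hr d]
      congr 1
      rw [Nat.factorial_succ]
      push_cast
      have h3 : (d.factorial : ℝ) ≠ 0 := Nat.cast_ne_zero.2 d.factorial_ne_zero
      field_simp

lemma lintegral_coord_Ssimp (d : ℕ) (i : Fin (d + 1)) :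
    ∫⁻ x in Ssimp (d + 1) 1, ENNReal.ofReal (x i) =
      ENNReal.ofReal (1 / (d + 2).factorial) := by
  rw [slice_lintegral d i 1 (fun t => ENNReal.ofReal t) ENNReal.measurable_ofReal]
  have h2 : ∀ᵐ t ∂(volume.restrict (Set.Icc (0:ℝ) 1)),
      ENNReal.ofReal t * volume (Ssimp d (1 - t)) =
      ENNReal.ofReal (t * ((1 - t) ^ d / d.factorial)) := by
    refine (ae_restrict_mem measurableSet_Icc).mono fun t ht => ?_
    rw [volume_Ssimp d (1 - t) (by simpa using ht.2), ← ENNReal.ofReal_mul ht.1]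
  rw [lintegral_congr_ae h2]
  have hint : IntegrableOn (fun t : ℝ => t * ((1 - t) ^ d / d.factorial))
      (Set.Icc (0:ℝ) 1) volume :=
    Continuous.integrableOn_Icc (by continuity)
  rw [← MeasureTheory.ofReal_integral_eq_lintegral_ofReal hint
    ((ae_restrict_mem measurableSet_Icc).mono fun t ht =>
      mul_nonneg ht.1 (div_nonneg (pow_nonneg (by linarith [ht.2]) _) (by positivity)))]
  congr 1
  have hrw : ∀ t : ℝ, t * ((1 - t) ^ d / d.factorial)
      = (1 / d.factorial) * (t * (1 - t) ^ d) := fun t => by ring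
  simp_rw [hrw]
  rw [integral_const_mul]
  have hJ : ∫ t in Set.Icc (0:ℝ) 1, t * (1 - t) ^ d
      = 1 / (d + 1) - 1 / (d + 2) := by
    have hrw2 : ∀ t : ℝ, t * (1 - t) ^ d = (1 - t) ^ d - (1 - t) ^ (d + 1) := by
      intro t; ring
    simp_rw [hrw2]
    rw [MeasureTheory.integral_Icc_eq_integral_Ioc, ← intervalIntegral.integral_of_le zero_le_one,
      intervalIntegral.integral_sub
        ((Continuous.intervalIntegrable (by continuity : Continuous fun t : ℝ => (1 - t) ^ d)) 0 1)
        ((Continuous.intervalIntegrable (by continuity : Continuous fun t : ℝ => (1 - t) ^ (d+1))) 0 1),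
      intervalIntegral.integral_comp_sub_left (fun u => u ^ d) 1,
      intervalIntegral.integral_comp_sub_left (fun u => u ^ (d+1)) 1]
    simp [integral_pow]
    ring
  rw [hJ]
  have h3 : (d.factorial : ℝ) ≠ 0 := Nat.cast_ne_zero.2 d.factorial_ne_zero
  rw [Nat.factorial_succ, Nat.factorial_succ]
  push_cast
  field_simp
  ring

lemma setIntegral_coord_Ssimp (d : ℕ) (i : Fin (d + 1)) :
    ∫ x in Ssimp (d + 1) 1, x i = 1 / (d + 2).factorial := by
  rw [MeasureTheory.integral_eq_lintegral_of_nonneg_ae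
    ((ae_restrict_mem (measurableSet_Ssimp _ _)).mono fun x hx => hx.1 i)
    (measurable_pi_apply i).aestronglyMeasurable.restrict]
  rw [lintegral_coord_Ssimp d i, ENNReal.toReal_ofReal (by positivity)]

lemma setIntegral_one_Ssimp (d : ℕ) : ∫ x in Ssimp d 1, (1:ℝ) = 1 / d.factorial := by
  rw [MeasureTheory.setIntegral_const, measureReal_def, volume_Ssimp d 1 zero_le_one, smul_eq_mul, mul_one,
    ENNReal.toReal_ofReal (by positivity)]
  simp

open Pointwise

lemma sum_smul_single {d : ℕ} (x : Fin d → ℝ) :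
    ∑ i, x i • (Pi.single i 1 : Fin d → ℝ) = x := by
  funext j
  rw [Finset.sum_apply]
  simp [Pi.single_apply, Finset.sum_ite_eq]

def vertS (d : ℕ) : Option (Fin d) → (Fin d → ℝ) :=
  fun o => o.elim 0 fun i => Pi.single i 1

lemma vertS_mem (d : ℕ) (o : Option (Fin d)) : vertS d o ∈ Ssimp d 1 := by
  rcases o with _ | i
  · exact ⟨fun i => le_refl 0, by simp [vertS]⟩
  · constructor
    · intro j
      rcases eq_or_ne i j with h | h
      · subst h; simp [vertS]
      · simp [vertS, Pi.single_apply, h.symm]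
    · simp [vertS, Finset.sum_pi_single]

lemma vertS_lat (d : ℕ) (o : Option (Fin d)) (i : Fin d) : ∃ z : ℤ, vertS d o i = (z : ℝ) := by
  rcases o with _ | j
  · exact ⟨0, by simp [vertS]⟩
  · rcases eq_or_ne i j with h | h
    · exact ⟨1, by subst h; simp [vertS]⟩
    · exact ⟨0, by simp [vertS, Pi.single_apply, h.symm]⟩

lemma vertS_inj (d : ℕ) : Function.Injective (vertS d) := by
  rintro (_ | i) (_ | j) h
  · rfl
  · exfalso; have := congrFun h j; simp [vertS] at this
  · exfalso; have := congrFun h i; simp [vertS] at this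
  · have := congrFun h j
    rcases eq_or_ne i j with hij | hij
    · rw [hij]
    · exfalso; simp [vertS, Pi.single_apply, hij.symm] at this

lemma setIntegral_coord_Ssimp' {d : ℕ} (i : Fin d) :
    ∫ x in Ssimp d 1, x i = 1 / (d + 1).factorial := by
  cases d with
  | zero => exact i.elim0
  | succ d' => exact setIntegral_coord_Ssimp d' i

lemma setIntegral_bary_Ssimp (d : ℕ) :
    ∫ x in Ssimp d 1, (1 - ∑ i, x i) = 1 / (d + 1).factorial := by
  have h1 : IntegrableOn (fun _ : Fin d → ℝ => (1:ℝ)) (Ssimp d 1) volume :=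
    continuous_const.continuousOn.integrableOn_compact (isCompact_Ssimp d 1)
  have h2 : IntegrableOn (fun x : Fin d → ℝ => ∑ i, x i) (Ssimp d 1) volume :=
    (continuous_finset_sum _ fun i _ => continuous_apply i).continuousOn.integrableOn_compact
      (isCompact_Ssimp d 1)
  rw [integral_sub h1 h2, setIntegral_one_Ssimp d,
    integral_finset_sum _ fun i _ => ((continuous_apply i).continuousOn.integrableOn_compact
      (isCompact_Ssimp d 1))]
  have : ∀ i : Fin d, (∫ x in Ssimp d 1, x i) = 1 / (d + 1).factorial := fun i =>
    setIntegral_coord_Ssimp' i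
  rw [Finset.sum_congr rfl fun i _ => this i, Finset.sum_const, Finset.card_univ,
    Fintype.card_fin, nsmul_eq_mul]
  have hd : ((d.factorial : ℝ)) ≠ 0 := Nat.cast_ne_zero.2 d.factorial_ne_zero
  rw [Nat.factorial_succ]
  push_cast
  field_simp
  ring

/-- Key per-simplex bound. -/
lemma key_simplex_bound {d : ℕ} {Q : Set (Fin (d + 1) → ℝ)} {f : (Fin (d + 1) → ℝ) → ℝ}
    (hf : ConvexOn ℝ Q f) (B : (Fin d → ℝ) →ᵃ[ℝ] (Fin (d + 1) → ℝ))
    (himgQ : ∀ x ∈ Ssimp d 1, B x ∈ Q)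
    (hpos : ∀ x ∈ Ssimp d 1, 0 ≤ f (B x)) :
    (∫ x in Ssimp d 1, f (B x)) ≤
      (1 / (d + 1).factorial) * ∑ o : Option (Fin d), f (B (vertS d o)) := by
  classical
  set c : Option (Fin d) → ℝ := fun o => f (B (vertS d o)) with hc
  set g : (Fin d → ℝ) → ℝ :=
    fun x => (1 - ∑ i, x i) * c none + ∑ i, x i * c (some i) with hg
  have hBdec : ∀ y, B y = B.linear y + B 0 := by
    intro y
    conv_lhs => rw [AffineMap.decomp B]
    rfl
  have hrep : ∀ x : Fin d → ℝ, B x =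
      (1 - ∑ i, x i) • B (vertS d none) + ∑ i, x i • B (vertS d (some i)) := by
    intro x
    have hnone : B (vertS d none) = B 0 := rfl
    have hsome : ∀ i, B (vertS d (some i)) = B.linear (Pi.single i 1) + B 0 := fun i => hBdec _
    rw [hnone]
    simp_rw [hsome, smul_add]
    rw [Finset.sum_add_distrib]
    have hlin : ∑ i, x i • B.linear (Pi.single i 1) = B.linear x := by
      have h1 : ∀ i : Fin d, x i • B.linear (Pi.single i 1)
          = B.linear (x i • (Pi.single i 1 : Fin d → ℝ)) :=
        fun i => (map_smul B.linear (x i) (Pi.single i 1 : Fin d → ℝ)).symm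
      rw [Finset.sum_congr rfl fun i _ => h1 i, ← map_sum B.linear
        (fun i => x i • (Pi.single i 1 : Fin d → ℝ)) Finset.univ, sum_smul_single]
    rw [hlin, ← Finset.sum_smul, hBdec x]
    module
  have hjen : ∀ x ∈ Ssimp d 1, f (B x) ≤ g x := by
    intro x hx
    set w : Option (Fin d) → ℝ := fun o => o.elim (1 - ∑ i, x i) x with hw
    have hw0 : ∀ o ∈ Finset.univ, 0 ≤ w o := by
      rintro (_ | i) -
      · simpa [hw] using hx.2
      · exact hx.1 i
    have hw1 : ∑ o, w o = 1 := by
      rw [Fintype.sum_option]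
      simp [hw]
    have hmem : ∀ o ∈ Finset.univ, B (vertS d o) ∈ Q := fun o _ =>
      himgQ _ (vertS_mem d o)
    have := hf.map_sum_le hw0 hw1 hmem
    have hsum : ∑ o, w o • B (vertS d o) = B x := by
      rw [Fintype.sum_option]
      exact (hrep x).symm
    rw [hsum] at this
    refine le_trans this (le_of_eq ?_)
    rw [Fintype.sum_option]
    simp [hw, hg, hc]
  have hgcont : Continuous g := by
    apply Continuous.add
    · exact (continuous_const.sub (continuous_finset_sum _ fun i _ =>
        continuous_apply i)).mul continuous_const
    · exact continuous_finset_sum _ fun i _ => (continuous_apply i).mul continuous_const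
  have hgint : IntegrableOn g (Ssimp d 1) volume :=
    hgcont.continuousOn.integrableOn_compact (isCompact_Ssimp d 1)
  have hmono : (∫ x in Ssimp d 1, f (B x)) ≤ ∫ x in Ssimp d 1, g x := by
    refine integral_mono_of_nonneg ?_ hgint ?_
    · exact (ae_restrict_mem (measurableSet_Ssimp d 1)).mono fun x hx => hpos x hx
    · exact (ae_restrict_mem (measurableSet_Ssimp d 1)).mono fun x hx => hjen x hx
  refine le_trans hmono (le_of_eq ?_)
  have hint1 : IntegrableOn (fun x : Fin d → ℝ => (1 - ∑ i, x i) * c none)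
      (Ssimp d 1) volume :=
    ((continuous_const.sub (continuous_finset_sum _ fun i _ =>
      continuous_apply i)).mul continuous_const).continuousOn.integrableOn_compact
      (isCompact_Ssimp d 1)
  have hint2 : IntegrableOn (fun x : Fin d → ℝ => ∑ i, x i * c (some i))
      (Ssimp d 1) volume :=
    (continuous_finset_sum _ fun i _ => (continuous_apply i).mul
      continuous_const).continuousOn.integrableOn_compact (isCompact_Ssimp d 1)
  rw [hg]
  rw [integral_add hint1 hint2, integral_mul_const,
    integral_finset_sum _ fun i _ => (((continuous_apply i).mul
      continuous_const).continuousOn.integrableOn_compact (isCompact_Ssimp d 1) :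
        IntegrableOn (fun x : Fin d → ℝ => x i * c (some i)) (Ssimp d 1) volume)]
  have hci : ∀ i : Fin d, (∫ x in Ssimp d 1, x i * c (some i))
      = (1 / (d + 1).factorial) * c (some i) := by
    intro i
    rw [integral_mul_const, setIntegral_coord_Ssimp' i]
  rw [Finset.sum_congr rfl fun i _ => hci i, setIntegral_bary_Ssimp d,
    Fintype.sum_option]
  simp only [hc]
  rw [mul_add, Finset.mul_sum]

/-- If the boundary of `kP` is triangulated by unimodular `(n-1)`-simplices (images of the
standard simplex `Δ` under injective lattice-preserving affine maps `A j`) such that every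
lattice point of `∂(kP)` lies in at most `n!` simplices, then for every convex `f ≥ 0` on
`∂(kP)`, the lattice-normalized boundary integral `∫_{∂kP} f dσ = ∑_j ∫_Δ f(A_j x) dx`
is at most `∑_{p ∈ ∂kP ∩ ℤⁿ} f(p)`. -/
theorem boundary_integral_le_lattice_sum {n : ℕ} (hn : 1 ≤ n)
    (V : Set (Fin n → ℝ)) (hV : V.Finite)
    (hVint : ∀ v ∈ V, ∀ i, ∃ z : ℤ, v i = (z : ℝ))
    (P : Set (Fin n → ℝ)) (hP : P = convexHull ℝ V)
    (hfull : (interior P).Nonempty)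
    (k : ℕ) (hk : 1 ≤ k)
    (m : ℕ) (A : Fin m → ((Fin (n - 1) → ℝ) →ᵃ[ℝ] (Fin n → ℝ)))
    (hinj : ∀ j, Function.Injective (A j))
    (hlat : ∀ j, ∀ x : Fin (n - 1) → ℝ, (∀ i, ∃ z : ℤ, x i = (z : ℝ)) →
      ∀ i, ∃ z : ℤ, A j x i = (z : ℝ))
    (Δ : Set (Fin (n - 1) → ℝ))
    (hΔ : Δ = {x : Fin (n - 1) → ℝ | (∀ i, 0 ≤ x i) ∧ ∑ i, x i ≤ 1})
    (hcover : frontier ((k : ℝ) • P) = ⋃ j, A j '' Δ)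
    (hcount : ∀ p ∈ frontier ((k : ℝ) • P), (∀ i, ∃ z : ℤ, p i = (z : ℝ)) →
      {j : Fin m | p ∈ A j '' Δ}.ncard ≤ n.factorial)
    (f : (Fin n → ℝ) → ℝ) (hf : ConvexOn ℝ ((k : ℝ) • P) f)
    (hfpos : ∀ x ∈ frontier ((k : ℝ) • P), 0 ≤ f x) :
    (∑ j, ∫ x in Δ, f (A j x)) ≤
      ∑ᶠ p ∈ {x ∈ frontier ((k : ℝ) • P) | ∀ i, ∃ z : ℤ, x i = (z : ℝ)}, f p := by
  classical
  obtain ⟨d, rfl⟩ : ∃ d, n = d + 1 := ⟨n - 1, by omega⟩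
  have hΔS : Δ = Ssimp d 1 := hΔ
  subst hΔS
  set Q : Set (Fin (d + 1) → ℝ) := (k : ℝ) • P with hQdef
  have hQcomp : IsCompact Q := by
    rw [hQdef, hP]
    exact (hV.isCompact_convexHull (𝕜 := ℝ)).smul _
  have hfrQ : frontier Q ⊆ Q := by
    have h1 : frontier Q ⊆ closure Q := frontier_subset_closure
    rwa [hQcomp.isClosed.closure_eq] at h1
  have himg : ∀ j, A j '' Ssimp d 1 ⊆ frontier Q := by
    intro j
    rw [hcover]
    exact Set.subset_iUnion (fun j => A j '' Ssimp d 1) j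
  have hAvert_mem : ∀ j o, A j (vertS d o) ∈ frontier Q := fun j o =>
    himg j ⟨vertS d o, vertS_mem d o, rfl⟩
  have hAvert_lat : ∀ j o i, ∃ z : ℤ, A j (vertS d o) i = (z : ℝ) := fun j o =>
    hlat j (vertS d o) (vertS_lat d o)
  -- finiteness of the set of lattice points of the frontier
  set L : Set (Fin (d + 1) → ℝ) := {x ∈ frontier Q | ∀ i, ∃ z : ℤ, x i = (z : ℝ)} with hLdef
  have hLfin : L.Finite := by
    obtain ⟨M, hM⟩ := hQcomp.isBounded.exists_norm_le
    have hZfin : (Set.pi Set.univ fun _ : Fin (d + 1) => Set.Icc (-⌈M⌉) ⌈M⌉).Finite :=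
      Set.Finite.pi fun _ => Set.finite_Icc _ _
    refine ((hZfin.image (fun z : Fin (d + 1) → ℤ => fun i => (z i : ℝ))).subset ?_)
    rintro x ⟨hxf, hxl⟩
    have hxQ : x ∈ Q := hfrQ hxf
    refine ⟨fun i => (hxl i).choose, fun i _ => ?_, ?_⟩
    · have hzi : x i = ((hxl i).choose : ℝ) := (hxl i).choose_spec
      have hb : |x i| ≤ M := by
        calc |x i| = ‖x i‖ := rfl
        _ ≤ ‖x‖ := norm_le_pi_norm x i
        _ ≤ M := hM x hxQ
      rw [hzi] at hb
      obtain ⟨hb1, hb2⟩ := abs_le.1 hb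
      constructor
      · have h2 : (-⌈M⌉ : ℝ) ≤ ((hxl i).choose : ℝ) := by
          push_cast
          linarith [Int.le_ceil M]
        exact_mod_cast h2
      · have h2 : ((hxl i).choose : ℝ) ≤ (⌈M⌉ : ℝ) := le_trans hb2 (Int.le_ceil M)
        exact_mod_cast h2
    · funext i
      exact ((hxl i).choose_spec).symm
  set F : Finset (Fin (d + 1) → ℝ) := hLfin.toFinset with hFdef
  have hmemF : ∀ j o, A j (vertS d o) ∈ F := fun j o =>
    hLfin.mem_toFinset.2 ⟨hAvert_mem j o, hAvert_lat j o⟩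
  have hFfr : ∀ p ∈ F, p ∈ frontier Q := fun p hp => (hLfin.mem_toFinset.1 hp).1
  have hFlat : ∀ p ∈ F, ∀ i, ∃ z : ℤ, p i = (z : ℝ) := fun p hp => (hLfin.mem_toFinset.1 hp).2
  -- per-simplex bound
  have KB : ∀ j : Fin m, (∫ x in Ssimp d 1, f (A j x)) ≤
      (1 / ((d + 1).factorial : ℝ)) * ∑ o : Option (Fin d), f (A j (vertS d o)) := fun j =>
    key_simplex_bound hf (A j) (fun x hx => hfrQ (himg j ⟨x, hx, rfl⟩))
      (fun x hx => hfpos _ (himg j ⟨x, hx, rfl⟩))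
  have hcfac : (0:ℝ) < ((d + 1).factorial : ℝ) := by
    exact_mod_cast Nat.factorial_pos (d + 1)
  calc ∑ j, ∫ x in Ssimp d 1, f (A j x)
      ≤ ∑ j, (1 / ((d + 1).factorial : ℝ)) * ∑ o : Option (Fin d), f (A j (vertS d o)) :=
        Finset.sum_le_sum fun j _ => KB j
    _ = (1 / ((d + 1).factorial : ℝ)) * ∑ j, ∑ o : Option (Fin d), f (A j (vertS d o)) :=
        (Finset.mul_sum _ _ _).symm
    _ ≤ ∑ p ∈ F, f p := ?_
    _ = ∑ᶠ p ∈ L, f p := by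
        rw [← hLfin.coe_toFinset]
        exact (finsum_mem_coe_finset f hLfin.toFinset).symm
  -- the counting argument
  have hexpand : ∀ (j : Fin m) (o : Option (Fin d)),
      f (A j (vertS d o)) = ∑ p ∈ F, if A j (vertS d o) = p then f p else 0 := by
    intro j o
    rw [Finset.sum_ite_eq F (A j (vertS d o)) f, if_pos (hmemF j o)]
  rw [Finset.sum_congr rfl fun j _ => Finset.sum_congr rfl fun o _ => hexpand j o]
  rw [Finset.sum_congr rfl fun j (_ : j ∈ Finset.univ) =>
    Finset.sum_comm (s := Finset.univ) (t := F), Finset.sum_comm (s := Finset.univ) (t := F),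
    Finset.mul_sum]
  apply Finset.sum_le_sum
  intro p hp
  have hfp : 0 ≤ f p := hfpos p (hFfr p hp)
  have hsplit : ∀ (j : Fin m) (o : Option (Fin d)),
      (if A j (vertS d o) = p then f p else 0)
        = (if A j (vertS d o) = p then (1:ℝ) else 0) * f p := by
    intro j o; split <;> simp
  rw [Finset.sum_congr rfl fun j _ => Finset.sum_congr rfl fun o _ => hsplit j o]
  rw [Finset.sum_congr rfl fun j (_ : j ∈ Finset.univ) => (Finset.sum_mul _ _ _).symm,
    ← Finset.sum_mul]
  have hinner : ∀ j : Fin m, (∑ o : Option (Fin d), if A j (vertS d o) = p then (1:ℝ) else 0)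
      ≤ (if p ∈ A j '' Ssimp d 1 then (1:ℝ) else 0) := by
    intro j
    by_cases hex : ∃ o, A j (vertS d o) = p
    · obtain ⟨o₀, ho₀⟩ := hex
      rw [Finset.sum_eq_single o₀ (fun o _ ho => if_neg fun h => ho
          (((hinj j).comp (vertS_inj d)) (h.trans ho₀.symm))) (fun h => absurd (Finset.mem_univ o₀) h),
        if_pos ho₀, if_pos ⟨vertS d o₀, vertS_mem d o₀, ho₀⟩]
    · rw [Finset.sum_eq_zero fun o _ => if_neg fun h => hex ⟨o, h⟩]
      split <;> norm_num
  have hNle : (∑ j, ∑ o : Option (Fin d), if A j (vertS d o) = p then (1:ℝ) else 0)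
      ≤ ((d + 1).factorial : ℝ) := by
    refine le_trans (Finset.sum_le_sum fun j _ => hinner j) ?_
    rw [Finset.sum_boole]
    have hset : {j : Fin m | p ∈ A j '' Ssimp d 1}
        = ↑(Finset.univ.filter fun j => p ∈ A j '' Ssimp d 1) := by
      ext j; simp
    have := hcount p (hFfr p hp) (hFlat p hp)
    rw [hset, Set.ncard_coe_finset] at this
    exact_mod_cast this
  have hN0 : (0:ℝ) ≤ ∑ j, ∑ o : Option (Fin d), if A j (vertS d o) = p then (1:ℝ) else 0 :=
    Finset.sum_nonneg fun j _ => Finset.sum_nonneg fun o _ => by split <;> norm_num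
  calc (1 / ((d + 1).factorial : ℝ)) *
        ((∑ j, ∑ o : Option (Fin d), if A j (vertS d o) = p then (1:ℝ) else 0) * f p)
      ≤ (1 / ((d + 1).factorial : ℝ)) * (((d + 1).factorial : ℝ) * f p) := by
        apply mul_le_mul_of_nonneg_left (mul_le_mul_of_nonneg_right hNle hfp) (by positivity)
    _ = f p := by field_simp
end

section
/- Let $P_1 \subset \mathbb{R}^{n_1}$ and $P_2 \subset \mathbb{R}^{n_2}$ be integral polytopes, $k \in \mathbb{N}$, and suppose that for all convex functions $g_1$ on $kP_1$ and $g_2$ on $kP_2$ one has $\frac{1}{\mathrm{Vol}(kP_i)}\int_{kP_i} g_i\, dV \leq \frac{1}{\chi(kP_i)}\sum_{p \in kP_i \cap \mathbb{Z}^{n_i}} g_i(p)$ for $i = 1,2$. Then for every convex function $f$ on $k(P_1 \times P_2)$, $\frac{1}{\mathrm{Vol}(k(P_1\times P_2))}\int_{k(P_1\times P_2)} f\, dV \leq \frac{1}{\chi(k(P_1\times P_2))}\sum_{p \in k(P_1\times P_2)\cap \mathbb{Z}^{n_1+n_2}} f(p)$. -/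
open MeasureTheory Pointwise

section Aux

variable {E : Type*} [NormedAddCommGroup E] [NormedSpace ℝ E]

/-- A convex function on a bounded convex set containing a ball, which is bounded above,
is bounded below. -/
lemma aux_lower_bound {s : Set E} (hb : Bornology.IsBounded s) {f : E → ℝ}
    (hf : ConvexOn ℝ s f) {x₀ : E} {r : ℝ} (hr : 0 < r) (hball : Metric.ball x₀ r ⊆ s)
    {M : ℝ} (hM : ∀ x ∈ s, f x ≤ M) : ∃ m, ∀ x ∈ s, m ≤ f x := by
  obtain ⟨R, hR⟩ := hb.subset_closedBall x₀
  set D : ℝ := max R 1 with hD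
  have hD1 : (1:ℝ) ≤ D := le_max_right _ _
  have hDpos : 0 < D := lt_of_lt_of_le one_pos hD1
  set c : ℝ := r / (2 * D) with hc
  have hcpos : 0 < c := div_pos hr (by linarith)
  have h1c : 0 < 1 + c := by linarith
  have hx₀s : x₀ ∈ s := hball (Metric.mem_ball_self hr)
  refine ⟨(f x₀ - (1/(1+c)) * M) / (c/(1+c)), fun y hy => ?_⟩
  have hyD : ‖x₀ - y‖ ≤ D := by
    have h1 := hR hy
    rw [Metric.mem_closedBall] at h1
    calc ‖x₀ - y‖ = dist x₀ y := (dist_eq_norm _ _).symm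
    _ = dist y x₀ := dist_comm _ _
    _ ≤ R := h1
    _ ≤ D := le_max_left _ _
  set z : E := x₀ + c • (x₀ - y) with hz
  have hzs : z ∈ s := by
    apply hball
    rw [Metric.mem_ball, dist_eq_norm]
    have hzx : z - x₀ = c • (x₀ - y) := by rw [hz]; abel
    rw [hzx, norm_smul, Real.norm_eq_abs, abs_of_pos hcpos]
    have hcD : c * D = r / 2 := by
      rw [hc]; field_simp
    calc c * ‖x₀ - y‖ ≤ c * D := by nlinarith
    _ = r / 2 := hcD
    _ < r := by linarith
  have hfz : f z ≤ M := hM z hzs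
  have hlam : 0 < c/(1+c) := div_pos hcpos h1c
  have hmu : 0 < 1/(1+c) := div_pos one_pos h1c
  have key := hf.2 hy hzs hlam.le hmu.le (by rw [← add_div, add_comm c 1, div_self h1c.ne'])
  have hcombo : (c/(1+c)) • y + (1/(1+c)) • z = x₀ := by
    rw [hz]
    match_scalars <;> field_simp <;> ring
  rw [hcombo] at key
  simp only [smul_eq_mul] at key
  rw [div_le_iff₀ hlam]
  nlinarith
end Aux

/-- A convex function on the convex hull of a finite set is integrable there. -/
lemma convexOn_integrableOn {E : Type*} [NormedAddCommGroup E] [NormedSpace ℝ E]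
    [MeasurableSpace E] [BorelSpace E] [FiniteDimensional ℝ E]
    (μ : Measure E) [μ.IsAddHaarMeasure] {W : Set E} (hW : W.Finite) {f : E → ℝ}
    (hf : ConvexOn ℝ (convexHull ℝ W) f) : IntegrableOn f (convexHull ℝ W) μ := by
  set s := convexHull ℝ W with hs
  have hconv : Convex ℝ s := convex_convexHull ℝ W
  have hcomp : IsCompact s := hW.isCompact_convexHull ℝ
  have hμs : μ s ≠ ⊤ := hcomp.measure_lt_top.ne
  rcases Set.eq_empty_or_nonempty W with hWe | hWne
  · simp [hs, hWe]
  have hne' : hW.toFinset.Nonempty := hW.toFinset_nonempty.mpr hWne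
  obtain ⟨M, hM⟩ : ∃ M, ∀ x ∈ s, f x ≤ M := by
    refine ⟨hW.toFinset.sup' hne' f, fun x hx => ?_⟩
    obtain ⟨y, hy, hxy⟩ := hf.exists_ge_of_mem_convexHull (subset_convexHull ℝ W) hx
    exact le_trans hxy (Finset.le_sup' f (hW.mem_toFinset.mpr hy))
  by_cases hint : (interior s).Nonempty
  · obtain ⟨x₀, hx₀⟩ := hint
    obtain ⟨r, hrpos, hball⟩ := Metric.isOpen_iff.mp isOpen_interior x₀ hx₀
    have hballs : Metric.ball x₀ r ⊆ s := hball.trans interior_subset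
    obtain ⟨m, hm⟩ := aux_lower_bound hcomp.isBounded hf hrpos hballs hM
    have hae : s =ᵐ[μ] (interior s) := by
      refine MeasureTheory.ae_eq_set.mpr ⟨?_, ?_⟩
      · refine measure_mono_null ?_ (hconv.addHaar_frontier μ)
        rw [hcomp.isClosed.frontier_eq]
      · rw [Set.diff_eq_empty.mpr interior_subset]; exact measure_empty
    have hmeas : AEStronglyMeasurable f (μ.restrict s) := by
      rw [Measure.restrict_congr_set hae]
      exact (hf.continuousOn_interior).aestronglyMeasurable isOpen_interior.measurableSet
    refine ⟨hmeas, ?_⟩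
    apply HasFiniteIntegral.restrict_of_bounded (C := max |M| |m|) hμs.lt_top
    rw [ae_restrict_iff' hcomp.isClosed.measurableSet]
    apply ae_of_all
    intro x hx
    rw [Real.norm_eq_abs, abs_le]
    constructor
    · have h1 := hm x hx
      have h2 := neg_abs_le m
      have h3 : |m| ≤ max |M| |m| := le_max_right _ _
      linarith
    · exact le_trans (hM x hx) (le_trans (le_abs_self M) (le_max_left _ _))
  · have h0 : μ s = 0 := by
      have h1 : s ⊆ frontier s := by
        rw [hcomp.isClosed.frontier_eq, Set.not_nonempty_iff_eq_empty.mp hint,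
          Set.diff_empty]
      exact measure_mono_null h1 (hconv.addHaar_frontier μ)
    rw [IntegrableOn, Measure.restrict_eq_zero.mpr h0]
    exact integrable_zero_measure

/-- Integer points in a bounded subset of `ℝⁿ` form a finite set. -/
lemma lattice_finite {n : ℕ} {s : Set (Fin n → ℝ)} (hb : Bornology.IsBounded s) :
    {x ∈ s | ∀ i, ∃ z : ℤ, x i = (z : ℝ)}.Finite := by
  obtain ⟨R, hR⟩ := hb.subset_closedBall 0
  have hsub : {x ∈ s | ∀ i, ∃ z : ℤ, x i = (z : ℝ)} ⊆
      (fun z : Fin n → ℤ => fun i => (z i : ℝ)) ''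
        (Set.pi Set.univ fun _ => Set.Icc (-⌈R⌉) ⌈R⌉) := by
    rintro x ⟨hxs, hxz⟩
    choose z hz using hxz
    refine ⟨z, fun i _ => ?_, by funext i; exact (hz i).symm⟩
    have hxR : ‖x‖ ≤ R := by
      have h1 := hR hxs
      rwa [Metric.mem_closedBall, dist_zero_right] at h1
    have hi : |x i| ≤ R := by
      have h2 := norm_le_pi_norm x i
      rw [Real.norm_eq_abs] at h2
      exact le_trans h2 hxR
    rw [hz i] at hi
    have hceil := Int.le_ceil R
    rw [Set.mem_Icc]
    constructor
    · have h3 : -(⌈R⌉ : ℝ) ≤ (z i : ℝ) := by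
        have h4 := neg_abs_le ((z i : ℝ))
        linarith
      exact_mod_cast h3
    · have h3 : (z i : ℝ) ≤ (⌈R⌉ : ℝ) := le_trans (le_trans (le_abs_self _) hi) hceil
      exact_mod_cast h3
  exact Set.Finite.subset (Set.Finite.image _ (Set.Finite.pi fun _ => Set.finite_Icc _ _)) hsub

/-- Slices of a convex function on a product are convex. -/
lemma slice_convexOn {E F : Type*} [AddCommGroup E] [Module ℝ E] [AddCommGroup F] [Module ℝ F]
    {s : Set E} {t : Set F} (ht : Convex ℝ t) {f : E × F → ℝ}
    (hf : ConvexOn ℝ (s ×ˢ t) f) {x : E} (hx : x ∈ s) :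
    ConvexOn ℝ t (fun y => f (x, y)) := by
  refine ⟨ht, fun y₁ hy₁ y₂ hy₂ a b ha hb hab => ?_⟩
  have h := hf.2 (Set.mk_mem_prod hx hy₁) (Set.mk_mem_prod hx hy₂) ha hb hab
  simpa [Prod.smul_mk, Prod.mk_add_mk, Convex.combo_self hab] using h

/-- If the continuous-average vs discrete-average inequality holds and the volume is zero,
then there are no lattice points. -/
lemma lattice_empty_of_volume_zero {n : ℕ} {S : Set (Fin n → ℝ)} (hconv : Convex ℝ S)
    (hfin : {x ∈ S | ∀ i, ∃ z : ℤ, x i = (z : ℝ)}.Finite)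
    (h : ∀ g : (Fin n → ℝ) → ℝ, ConvexOn ℝ S g →
      (∫ x in S, g x) / (volume S).toReal ≤
        (∑ᶠ p ∈ {x ∈ S | ∀ i, ∃ z : ℤ, x i = (z : ℝ)}, g p) /
          ({x ∈ S | ∀ i, ∃ z : ℤ, x i = (z : ℝ)}.ncard : ℝ))
    (hv : volume S = 0) : {x ∈ S | ∀ i, ∃ z : ℤ, x i = (z : ℝ)} = ∅ := by
  by_contra hne
  rw [← Ne, ← Set.nonempty_iff_ne_empty] at hne
  have hcard : 0 < hfin.toFinset.card := Finset.card_pos.mpr (hfin.toFinset_nonempty.mpr hne)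
  have hcardR : (0:ℝ) < (hfin.toFinset.card : ℝ) := by exact_mod_cast hcard
  have hh := h (fun _ => (-1:ℝ)) (convexOn_const _ hconv)
  rw [Measure.restrict_eq_zero.mpr hv] at hh
  rw [finsum_mem_eq_finite_toFinset_sum _ hfin, Set.ncard_eq_toFinset_card _ hfin] at hh
  simp only [integral_zero_measure, zero_div, Finset.sum_const, nsmul_eq_mul,
    mul_neg, mul_one] at hh
  rw [neg_div, div_self hcardR.ne'] at hh
  linarith

/-- If the Chow inequality (continuous average ≤ discrete average over lattice points) holds
for all convex functions on `kP₁` and on `kP₂`, then it holds for all convex functions on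
`k(P₁ × P₂) = kP₁ × kP₂`. -/
theorem product_chow_semistable {n₁ n₂ : ℕ}
    (V₁ : Set (Fin n₁ → ℝ)) (hV₁ : V₁.Finite)
    (hV₁int : ∀ v ∈ V₁, ∀ i, ∃ z : ℤ, v i = (z : ℝ))
    (P₁ : Set (Fin n₁ → ℝ)) (hP₁ : P₁ = convexHull ℝ V₁)
    (V₂ : Set (Fin n₂ → ℝ)) (hV₂ : V₂.Finite)
    (hV₂int : ∀ v ∈ V₂, ∀ i, ∃ z : ℤ, v i = (z : ℝ))
    (P₂ : Set (Fin n₂ → ℝ)) (hP₂ : P₂ = convexHull ℝ V₂)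
    (k : ℕ) (hk : 1 ≤ k)
    (h₁ : ∀ g₁ : (Fin n₁ → ℝ) → ℝ, ConvexOn ℝ ((k : ℝ) • P₁) g₁ →
      (∫ x in (k : ℝ) • P₁, g₁ x) / (volume ((k : ℝ) • P₁)).toReal ≤
        (∑ᶠ p ∈ {x ∈ (k : ℝ) • P₁ | ∀ i, ∃ z : ℤ, x i = (z : ℝ)}, g₁ p) /
          ({x ∈ (k : ℝ) • P₁ | ∀ i, ∃ z : ℤ, x i = (z : ℝ)}.ncard : ℝ))
    (h₂ : ∀ g₂ : (Fin n₂ → ℝ) → ℝ, ConvexOn ℝ ((k : ℝ) • P₂) g₂ →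
      (∫ y in (k : ℝ) • P₂, g₂ y) / (volume ((k : ℝ) • P₂)).toReal ≤
        (∑ᶠ p ∈ {y ∈ (k : ℝ) • P₂ | ∀ i, ∃ z : ℤ, y i = (z : ℝ)}, g₂ p) /
          ({y ∈ (k : ℝ) • P₂ | ∀ i, ∃ z : ℤ, y i = (z : ℝ)}.ncard : ℝ))
    (f : (Fin n₁ → ℝ) × (Fin n₂ → ℝ) → ℝ)
    (hf : ConvexOn ℝ (((k : ℝ) • P₁) ×ˢ ((k : ℝ) • P₂)) f) :
    (∫ x in ((k : ℝ) • P₁) ×ˢ ((k : ℝ) • P₂), f x) /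
        (volume (((k : ℝ) • P₁) ×ˢ ((k : ℝ) • P₂))).toReal ≤
      (∑ᶠ p ∈ {q ∈ ((k : ℝ) • P₁) ×ˢ ((k : ℝ) • P₂) |
          (∀ i, ∃ z : ℤ, q.1 i = (z : ℝ)) ∧ (∀ i, ∃ z : ℤ, q.2 i = (z : ℝ))}, f p) /
        ({q ∈ ((k : ℝ) • P₁) ×ˢ ((k : ℝ) • P₂) |
          (∀ i, ∃ z : ℤ, q.1 i = (z : ℝ)) ∧ (∀ i, ∃ z : ℤ, q.2 i = (z : ℝ))}.ncard : ℝ) := by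
  set S₁ := (k : ℝ) • P₁ with hS₁def
  set S₂ := (k : ℝ) • P₂ with hS₂def
  have hS₁ : S₁ = convexHull ℝ ((k:ℝ) • V₁) := by rw [hS₁def, hP₁, convexHull_smul]
  have hS₂ : S₂ = convexHull ℝ ((k:ℝ) • V₂) := by rw [hS₂def, hP₂, convexHull_smul]
  have hW₁ : ((k:ℝ) • V₁).Finite := hV₁.smul_set
  have hW₂ : ((k:ℝ) • V₂).Finite := hV₂.smul_set
  have hcomp₁ : IsCompact S₁ := by rw [hS₁]; exact hW₁.isCompact_convexHull ℝ
  have hcomp₂ : IsCompact S₂ := by rw [hS₂]; exact hW₂.isCompact_convexHull ℝ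
  have hconv₁ : Convex ℝ S₁ := by rw [hS₁]; exact convex_convexHull ℝ _
  have hconv₂ : Convex ℝ S₂ := by rw [hS₂]; exact convex_convexHull ℝ _
  have hLfin₁ : {x ∈ S₁ | ∀ i, ∃ z : ℤ, x i = (z : ℝ)}.Finite := lattice_finite hcomp₁.isBounded
  have hLfin₂ : {y ∈ S₂ | ∀ i, ∃ z : ℤ, y i = (z : ℝ)}.Finite := lattice_finite hcomp₂.isBounded
  have hLeq : {q ∈ S₁ ×ˢ S₂ |
        (∀ i, ∃ z : ℤ, q.1 i = (z : ℝ)) ∧ (∀ i, ∃ z : ℤ, q.2 i = (z : ℝ))}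
      = {x ∈ S₁ | ∀ i, ∃ z : ℤ, x i = (z : ℝ)} ×ˢ {y ∈ S₂ | ∀ i, ∃ z : ℤ, y i = (z : ℝ)} := by
    ext ⟨x, y⟩
    simp only [Set.mem_setOf_eq, Set.mem_prod]
    tauto
  by_cases hv₁ : volume S₁ = 0
  · have hL₁e := lattice_empty_of_volume_zero hconv₁ hLfin₁ h₁ hv₁
    have hLe : {q ∈ S₁ ×ˢ S₂ |
        (∀ i, ∃ z : ℤ, q.1 i = (z : ℝ)) ∧ (∀ i, ∃ z : ℤ, q.2 i = (z : ℝ))} = ∅ := by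
      rw [hLeq, hL₁e, Set.empty_prod]
    have hvol : volume (S₁ ×ˢ S₂) = 0 := by
      rw [Measure.volume_eq_prod, Measure.prod_prod, hv₁, zero_mul]
    rw [hLe, Measure.restrict_eq_zero.mpr hvol]
    simp
  by_cases hv₂ : volume S₂ = 0
  · have hL₂e := lattice_empty_of_volume_zero hconv₂ hLfin₂ h₂ hv₂
    have hLe : {q ∈ S₁ ×ˢ S₂ |
        (∀ i, ∃ z : ℤ, q.1 i = (z : ℝ)) ∧ (∀ i, ∃ z : ℤ, q.2 i = (z : ℝ))} = ∅ := by
      rw [hLeq, hL₂e, Set.prod_empty]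
    have hvol : volume (S₁ ×ˢ S₂) = 0 := by
      rw [Measure.volume_eq_prod, Measure.prod_prod, hv₂, mul_zero]
    rw [hLe, Measure.restrict_eq_zero.mpr hvol]
    simp
  -- main case
  have ha₁ : 0 < (volume S₁).toReal := ENNReal.toReal_pos hv₁ hcomp₁.measure_lt_top.ne
  have ha₂ : 0 < (volume S₂).toReal := ENNReal.toReal_pos hv₂ hcomp₂.measure_lt_top.ne
  -- lattice points are nonempty
  have hLne₁ : {x ∈ S₁ | ∀ i, ∃ z : ℤ, x i = (z : ℝ)}.Nonempty := by
    have hV₁ne : V₁.Nonempty := by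
      by_contra h
      rw [Set.not_nonempty_iff_eq_empty] at h
      apply hv₁
      rw [hS₁, h]
      simp
    obtain ⟨v, hv⟩ := hV₁ne
    refine ⟨(k:ℝ) • v, ?_, ?_⟩
    · rw [hS₁]
      exact subset_convexHull ℝ _ (Set.smul_mem_smul_set hv)
    · intro i
      obtain ⟨z, hz⟩ := hV₁int v hv i
      refine ⟨(k:ℤ) * z, ?_⟩
      simp only [Pi.smul_apply, smul_eq_mul, hz]
      push_cast
      ring
  have hLne₂ : {y ∈ S₂ | ∀ i, ∃ z : ℤ, y i = (z : ℝ)}.Nonempty := by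
    have hV₂ne : V₂.Nonempty := by
      by_contra h
      rw [Set.not_nonempty_iff_eq_empty] at h
      apply hv₂
      rw [hS₂, h]
      simp
    obtain ⟨v, hv⟩ := hV₂ne
    refine ⟨(k:ℝ) • v, ?_, ?_⟩
    · rw [hS₂]
      exact subset_convexHull ℝ _ (Set.smul_mem_smul_set hv)
    · intro i
      obtain ⟨z, hz⟩ := hV₂int v hv i
      refine ⟨(k:ℤ) * z, ?_⟩
      simp only [Pi.smul_apply, smul_eq_mul, hz]
      push_cast
      ring
  have hN₁ : (0:ℝ) < (hLfin₁.toFinset.card : ℝ) := by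
    exact_mod_cast Finset.card_pos.mpr (hLfin₁.toFinset_nonempty.mpr hLne₁)
  have hN₂ : (0:ℝ) < (hLfin₂.toFinset.card : ℝ) := by
    exact_mod_cast Finset.card_pos.mpr (hLfin₂.toFinset_nonempty.mpr hLne₂)
  -- slices
  have hslice : ∀ x ∈ S₁, ConvexOn ℝ S₂ (fun y => f (x, y)) :=
    fun x hx => slice_convexOn hconv₂ hf hx
  haveI : (volume : Measure ((Fin n₁ → ℝ) × (Fin n₂ → ℝ))).IsAddHaarMeasure :=
    Measure.prod.instIsAddHaarMeasure volume volume
  have hsliceInt : ∀ x ∈ S₁, IntegrableOn (fun y => f (x, y)) S₂ volume := by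
    intro x hx
    have h := hslice x hx
    rw [hS₂] at h ⊢
    exact convexOn_integrableOn volume hW₂ h
  -- integrability of f on the product
  have hfInt : IntegrableOn f (S₁ ×ˢ S₂) volume := by
    have hf' := hf
    have hprodhull : S₁ ×ˢ S₂ = convexHull ℝ (((k:ℝ) • V₁) ×ˢ ((k:ℝ) • V₂)) := by
      rw [hS₁, hS₂, convexHull_prod]
    rw [hprodhull] at hf' ⊢
    exact convexOn_integrableOn volume (hW₁.prod hW₂) hf'
  -- convexity of the partial integral
  have hFconv : ConvexOn ℝ S₁ (fun x => ∫ y in S₂, f (x, y)) := by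
    refine ⟨hconv₁, fun x₁ hx₁ x₂ hx₂ a b ha hb hab => ?_⟩
    have hxm : a • x₁ + b • x₂ ∈ S₁ := hconv₁ hx₁ hx₂ ha hb hab
    have key : ∀ y ∈ S₂, f (a • x₁ + b • x₂, y) ≤ a * f (x₁, y) + b * f (x₂, y) := by
      intro y hy
      have h := hf.2 (Set.mk_mem_prod hx₁ hy) (Set.mk_mem_prod hx₂ hy) ha hb hab
      simpa [Prod.smul_mk, Prod.mk_add_mk, Convex.combo_self hab] using h
    have hInt1 : IntegrableOn (fun y => f (a • x₁ + b • x₂, y)) S₂ volume := hsliceInt _ hxm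
    have hIa : IntegrableOn (fun y => a * f (x₁, y)) S₂ volume := (hsliceInt _ hx₁).const_mul a
    have hIb : IntegrableOn (fun y => b * f (x₂, y)) S₂ volume := (hsliceInt _ hx₂).const_mul b
    calc (∫ y in S₂, f (a • x₁ + b • x₂, y))
        ≤ ∫ y in S₂, (a * f (x₁, y) + b * f (x₂, y)) :=
          setIntegral_mono_on hInt1 (hIa.add hIb) hcomp₂.isClosed.measurableSet key
      _ = a • (∫ y in S₂, f (x₁, y)) + b • (∫ y in S₂, f (x₂, y)) := by
          rw [integral_add hIa hIb, integral_const_mul, integral_const_mul,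
            smul_eq_mul, smul_eq_mul]
  -- Fubini
  have hFub : (∫ z in S₁ ×ˢ S₂, f z) = ∫ x in S₁, ∫ y in S₂, f (x, y) := by
    rw [Measure.volume_eq_prod] at hfInt ⊢
    exact setIntegral_prod f hfInt
  -- apply the hypotheses
  have step1 := h₁ (fun x => ∫ y in S₂, f (x, y)) hFconv
  rw [finsum_mem_eq_finite_toFinset_sum _ hLfin₁, Set.ncard_eq_toFinset_card _ hLfin₁] at step1
  have step2 : ∀ p ∈ hLfin₁.toFinset,
      (∫ y in S₂, f (p, y)) / (volume S₂).toReal ≤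
        (∑ q ∈ hLfin₂.toFinset, f (p, q)) / (hLfin₂.toFinset.card : ℝ) := by
    intro p hp
    have hp' := hLfin₁.mem_toFinset.mp hp
    have h := h₂ (fun y => f (p, y)) (hslice p hp'.1)
    rwa [finsum_mem_eq_finite_toFinset_sum _ hLfin₂, Set.ncard_eq_toFinset_card _ hLfin₂] at h
  have hsum : (∑ p ∈ hLfin₁.toFinset, ∫ y in S₂, f (p, y)) / (volume S₂).toReal ≤
      (∑ p ∈ hLfin₁.toFinset, ∑ q ∈ hLfin₂.toFinset, f (p, q)) / (hLfin₂.toFinset.card : ℝ) := by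
    rw [Finset.sum_div, Finset.sum_div]
    exact Finset.sum_le_sum step2
  -- rewrite the goal
  have htoF : (hLfin₁.prod hLfin₂).toFinset = hLfin₁.toFinset ×ˢ hLfin₂.toFinset := by
    ext ⟨x, y⟩
    simp [Set.Finite.mem_toFinset]
  rw [hFub, Measure.volume_eq_prod, Measure.prod_prod, ENNReal.toReal_mul, hLeq,
    finsum_mem_eq_finite_toFinset_sum _ (hLfin₁.prod hLfin₂),
    Set.ncard_eq_toFinset_card _ (hLfin₁.prod hLfin₂), htoF, Finset.sum_product,
    Finset.card_product]
  push_cast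
  calc (∫ x in S₁, ∫ y in S₂, f (x, y)) / ((volume S₁).toReal * (volume S₂).toReal)
      = ((∫ x in S₁, ∫ y in S₂, f (x, y)) / (volume S₁).toReal) / (volume S₂).toReal := by
        rw [div_div]
    _ ≤ ((∑ p ∈ hLfin₁.toFinset, ∫ y in S₂, f (p, y)) / (hLfin₁.toFinset.card : ℝ)) /
          (volume S₂).toReal := by gcongr
    _ = ((∑ p ∈ hLfin₁.toFinset, ∫ y in S₂, f (p, y)) / (volume S₂).toReal) /
          (hLfin₁.toFinset.card : ℝ) := by ring
    _ ≤ ((∑ p ∈ hLfin₁.toFinset, ∑ q ∈ hLfin₂.toFinset, f (p, q)) /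
          (hLfin₂.toFinset.card : ℝ)) / (hLfin₁.toFinset.card : ℝ) := by gcongr
    _ = (∑ p ∈ hLfin₁.toFinset, ∑ q ∈ hLfin₂.toFinset, f (p, q)) /
          ((hLfin₁.toFinset.card : ℝ) * (hLfin₂.toFinset.card : ℝ)) := by ring
end
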